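/- Let I = {0,...,N−1}, V ⊆ I nonempty, c ∈ [0,1]. Then the polytope P = {x ∈ ℝ^N : x ≥ 0, ∑_{i∈I} x_i = 1, ∑_{i∈V} x_i ≥ c} equals the set {c·y + (1−c)·w : y ∈ PSS_V, w ∈ PSS_I}, where PSS_K = {y ∈ ℝ^N : y ≥ 0, ∑_{j∈K} y_j = 1, y_j = 0 for j∉K}. -/

import Mathlib

def PSS (N : ℕ) (K : Finset (Fin N)) : Set (Fin N → ℝ) :=
  {y | (∀ i, 0 ≤ y i) ∧ (∑ j ∈ K, y j = 1) ∧ ∀ j ∉ K, y j = 0}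

theorem single_constraint_decomposition
    (N : ℕ) (V : Finset (Fin N)) (hV : V.Nonempty)
    (c : ℝ) (hc0 : 0 ≤ c) (hc1 : c ≤ 1) :
    {x : Fin N → ℝ | (∀ i, 0 ≤ x i) ∧ (∑ i, x i = 1) ∧ c ≤ ∑ i ∈ V, x i} =
      {x : Fin N → ℝ | ∃ y ∈ PSS N V, ∃ w ∈ PSS N Finset.univ,
        x = fun i => c * y i + (1 - c) * w i} := by
  ext x
  simp only [Set.mem_setOf_eq, PSS]
  constructor
  · rintro ⟨hx0, hxsum, hxc⟩
    set s := ∑ i ∈ V, x i with hs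
    by_cases hc : c = 0
    · obtain ⟨v, hv⟩ := hV
      refine ⟨fun i => if i = v then 1 else 0,
        ⟨fun i => by dsimp only; split <;> norm_num,
         by rw [Finset.sum_ite_eq' V v (fun _ => (1:ℝ))]; simp [hv],
         fun j hj => by simp; rintro rfl; exact hj hv⟩,
        x, ⟨hx0, hxsum, fun j hj => absurd (Finset.mem_univ j) hj⟩, ?_⟩
      funext i; simp [hc]
    · have hcpos : 0 < c := lt_of_le_of_ne hc0 (Ne.symm hc)
      have hspos : 0 < s := lt_of_lt_of_le hcpos hxc
      by_cases hc1' : c = 1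
      · have hsle : s ≤ 1 := by
          rw [← hxsum]
          exact Finset.sum_le_sum_of_subset_of_nonneg (Finset.subset_univ V)
            (fun i _ _ => hx0 i)
        have hs1 : s = 1 := le_antisymm hsle (hc1' ▸ hxc)
        have hzero : ∀ j ∉ V, x j = 0 := by
          have hcompl : ∑ i ∈ Finset.univ \ V, x i = 0 := by
            have := Finset.sum_sdiff_eq_sub (Finset.subset_univ V) (f := x)
            rw [hxsum, ← hs] at this
            rw [this, hs1]; ring
          intro j hj
          have := (Finset.sum_eq_zero_iff_of_nonneg
            (fun i _ => hx0 i)).mp hcompl j (by simp [hj])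
          exact this
        refine ⟨x, ⟨hx0, hs1, hzero⟩, x,
          ⟨hx0, hxsum, fun j hj => absurd (Finset.mem_univ j) hj⟩, ?_⟩
        funext i; rw [hc1']; ring
      · have hclt : c < 1 := lt_of_le_of_ne hc1 hc1'
        have h1c : 0 < 1 - c := by linarith
        set y : Fin N → ℝ := fun i => if i ∈ V then x i / s else 0 with hy
        have hysum : ∑ j ∈ V, y j = 1 := by
          rw [hy]
          simp only [Finset.sum_ite_of_true (fun i hi => hi)]
          rw [← Finset.sum_div, ← hs, div_self hspos.ne']
        have hcy : ∀ i, c * y i ≤ x i := by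
          intro i
          rw [hy]
          by_cases hiV : i ∈ V
          · simp only [hiV, if_true]
            rw [← mul_div_assoc, div_le_iff₀ hspos]
            nlinarith [mul_le_mul_of_nonneg_right hxc (hx0 i)]
          · simp [hiV, hx0 i]
        set w : Fin N → ℝ := fun i => (x i - c * y i) / (1 - c) with hw
        have hy0 : ∀ i, 0 ≤ y i := by
          intro i; rw [hy]; dsimp only
          split
          · exact div_nonneg (hx0 i) hspos.le
          · exact le_refl 0
        refine ⟨y, ⟨hy0, hysum, fun j hj => by simp [hy, hj]⟩,
          w, ⟨fun i => div_nonneg (by linarith [hcy i]) h1c.le, ?_,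
            fun j hj => absurd (Finset.mem_univ j) hj⟩, ?_⟩
        · rw [hw]
          simp only
          rw [← Finset.sum_div, div_eq_one_iff_eq h1c.ne']
          have huy : ∑ i, y i = 1 := by
            rw [← hysum]
            exact (Finset.sum_subset (Finset.subset_univ V)
              (fun j _ hj => by simp [hy, hj])).symm
          rw [Finset.sum_sub_distrib, hxsum, ← Finset.mul_sum, huy]
          ring
        · funext i
          rw [hw]
          field_simp
          ring
  · rintro ⟨y, ⟨hy0, hysum, hyz⟩, w, ⟨hw0, hwsum, _⟩, rfl⟩
    refine ⟨fun i => add_nonneg (mul_nonneg hc0 (hy0 i)) (mul_nonneg (by linarith) (hw0 i)), ?_, ?_⟩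
    · have huy : ∑ i, y i = 1 := by
        rw [← hysum]
        exact (Finset.sum_subset (Finset.subset_univ V)
          (fun j _ hj => hyz j hj)).symm
      rw [Finset.sum_add_distrib, ← Finset.mul_sum, ← Finset.mul_sum, huy, hwsum]
      ring
    · have hwV : 0 ≤ ∑ i ∈ V, w i := Finset.sum_nonneg (fun i _ => hw0 i)
      calc c = c * 1 + (1 - c) * 0 := by ring
        _ ≤ ∑ i ∈ V, (c * y i + (1 - c) * w i) := by
            rw [Finset.sum_add_distrib, ← Finset.mul_sum, ← Finset.mul_sum, hysum]
            nlinarith
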